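/- Σ_{n=1}^∞ (-1)^{n-1} / ((2n−1)^2(2n+1)^2(2n+3)^2) = −G/32 + 19/576, where G is Catalan's constant. -/

import Mathlib

open Real
open Filter

private lemma base_summable : Summable (fun n : ℕ => (1:ℝ)/((n:ℝ)+1)^2) := by
  have := (summable_nat_add_iff 1).mpr (Real.summable_one_div_nat_pow.mpr one_lt_two)
  simpa using this

private lemma summable_of_le (f : ℕ → ℝ) (h : ∀ n : ℕ, |f n| ≤ 1/((n:ℝ)+1)^2) :
    Summable f :=
  Summable.of_norm_bounded base_summable h

private lemma S1 : Summable (fun n : ℕ => (-1:ℝ)^n / (2*(n:ℝ)+1)^2) := by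
  apply summable_of_le
  intro n
  have hn : (0:ℝ) < (n:ℝ) + 1 := by positivity
  rw [abs_div, abs_pow, abs_neg, abs_one, one_pow]
  rw [abs_of_nonneg (by positivity : (0:ℝ) ≤ (2*(n:ℝ)+1)^2)]
  apply div_le_div_of_nonneg_left zero_le_one (by positivity)
  nlinarith [sq_nonneg ((n:ℝ))]

private lemma S2 : Summable (fun n : ℕ => (-1:ℝ)^n / (2*(n:ℝ)+3)^2) := by
  apply summable_of_le
  intro n
  rw [abs_div, abs_pow, abs_neg, abs_one, one_pow]
  rw [abs_of_nonneg (by positivity : (0:ℝ) ≤ (2*(n:ℝ)+3)^2)]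
  apply div_le_div_of_nonneg_left zero_le_one (by positivity)
  nlinarith [sq_nonneg ((n:ℝ)), Nat.cast_nonneg (α := ℝ) n]

private lemma S3 : Summable (fun n : ℕ => (-1:ℝ)^n / (2*(n:ℝ)+5)^2) := by
  apply summable_of_le
  intro n
  rw [abs_div, abs_pow, abs_neg, abs_one, one_pow]
  rw [abs_of_nonneg (by positivity : (0:ℝ) ≤ (2*(n:ℝ)+5)^2)]
  apply div_le_div_of_nonneg_left zero_le_one (by positivity)
  nlinarith [sq_nonneg ((n:ℝ)), Nat.cast_nonneg (α := ℝ) n]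

private lemma S4 : Summable (fun n : ℕ => (-1:ℝ)^n / (2*(n:ℝ)+1) - (-1:ℝ)^n / (2*(n:ℝ)+5)) := by
  apply summable_of_le
  intro n
  have h1 : (0:ℝ) < 2*(n:ℝ)+1 := by positivity
  have h5 : (0:ℝ) < 2*(n:ℝ)+5 := by positivity
  have heq : (-1:ℝ)^n / (2*(n:ℝ)+1) - (-1:ℝ)^n / (2*(n:ℝ)+5)
      = (-1:ℝ)^n * (4 / ((2*(n:ℝ)+1)*(2*(n:ℝ)+5))) := by
    field_simp; ring
  rw [heq, abs_mul, abs_pow, abs_neg, abs_one, one_pow, one_mul,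
    abs_of_nonneg (by positivity : (0:ℝ) ≤ 4 / ((2*(n:ℝ)+1)*(2*(n:ℝ)+5)))]
  rw [div_le_div_iff₀ (by positivity) (by positivity)]
  nlinarith [Nat.cast_nonneg (α := ℝ) n, sq_nonneg ((n:ℝ))]

private lemma Smain : Summable (fun n : ℕ => (-1:ℝ)^n /
    ((2*(n:ℝ)+1)^2 * (2*(n:ℝ)+3)^2 * (2*(n:ℝ)+5)^2)) := by
  apply summable_of_le
  intro n
  rw [abs_div, abs_pow, abs_neg, abs_one, one_pow]
  rw [abs_of_nonneg (by positivity : (0:ℝ) ≤ (2*(n:ℝ)+1)^2 * (2*(n:ℝ)+3)^2 * (2*(n:ℝ)+5)^2)]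
  apply div_le_div_of_nonneg_left zero_le_one (by positivity)
  nlinarith [sq_nonneg ((n:ℝ)), Nat.cast_nonneg (α := ℝ) n,
    sq_nonneg ((2*(n:ℝ)+3)*(2*(n:ℝ)+5))]

/-- telescoping sum -/
private lemma h4 : HasSum (fun n : ℕ => (-1:ℝ)^n / (2*(n:ℝ)+1) - (-1:ℝ)^n / (2*(n:ℝ)+5)) (2/3) := by
  set v : ℕ → ℝ := fun n => (-1:ℝ)^n / (2*(n:ℝ)+1) with hv
  have hf : ∀ n : ℕ, (-1:ℝ)^n / (2*(n:ℝ)+1) - (-1:ℝ)^n / (2*(n:ℝ)+5) = v n - v (n+2) := by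
    intro n
    simp only [hv]
    push_cast
    rw [pow_add]
    ring_nf
  have hvlim : Tendsto v atTop (nhds 0) := by
    apply squeeze_zero_norm (a := fun n : ℕ => 1/((n:ℝ)+1))
    · intro n
      rw [Real.norm_eq_abs, hv]
      simp only
      rw [abs_div, abs_pow, abs_neg, abs_one, one_pow,
        abs_of_nonneg (by positivity : (0:ℝ) ≤ 2*(n:ℝ)+1)]
      rw [div_le_div_iff₀ (by positivity) (by positivity)]
      nlinarith [Nat.cast_nonneg (α := ℝ) n]
    · exact tendsto_one_div_add_atTop_nhds_zero_nat
  have hpartial : ∀ N : ℕ, ∑ n ∈ Finset.range N, (v n - v (n+2))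
      = (v 0 - v N) + (v 1 - v (N+1)) := by
    intro N
    have : ∀ n : ℕ, v n - v (n+2) = (v n - v (n+1)) + (v (n+1) - v (n+2)) := by
      intro n; ring
    simp_rw [this, Finset.sum_add_distrib, Finset.sum_range_sub' v,
      Finset.sum_range_sub' (fun n => v (n+1))]
  have hsum : Summable (fun n : ℕ => (-1:ℝ)^n / (2*(n:ℝ)+1) - (-1:ℝ)^n / (2*(n:ℝ)+5)) := S4
  have hS := hsum.hasSum
  have htends := hS.tendsto_sum_nat
  have htends2 : Tendsto (fun N => ∑ n ∈ Finset.range N,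
      ((-1:ℝ)^n / (2*(n:ℝ)+1) - (-1:ℝ)^n / (2*(n:ℝ)+5))) atTop (nhds (2/3)) := by
    simp_rw [hf, hpartial]
    have h1 : Tendsto (fun N : ℕ => v (N+1)) atTop (nhds 0) :=
      hvlim.comp (tendsto_add_atTop_nat 1)
    have : Tendsto (fun N : ℕ => (v 0 - v N) + (v 1 - v (N+1))) atTop
        (nhds ((v 0 - 0) + (v 1 - 0))) :=
      ((tendsto_const_nhds.sub hvlim).add (tendsto_const_nhds.sub h1))
    convert this using 2
    simp [hv]
    norm_num
  have := tendsto_nhds_unique htends htends2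
  rwa [this] at hS

/-- Σ_{n=1}^∞ (-1)^{n-1} / ((2n−1)²(2n+1)²(2n+3)²) = −G/32 + 19/576, where
`G = Σ_{n=1}^∞ (-1)^{n-1}/(2n−1)²` is Catalan's constant.
(All summation indices are shifted: `n : ℕ` here corresponds to `n + 1` in the statement.) -/
theorem sum_alt_three_odd_squares (G : ℝ)
    (hG : G = ∑' n : ℕ, (-1 : ℝ) ^ n / (2 * (n : ℝ) + 1) ^ 2) :
    ∑' n : ℕ, (-1 : ℝ) ^ n /
        ((2 * (n : ℝ) + 1) ^ 2 * (2 * (n : ℝ) + 3) ^ 2 * (2 * (n : ℝ) + 5) ^ 2) =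
      -G / 32 + 19 / 576 := by
  -- shifted sums
  have h1 : HasSum (fun n : ℕ => (-1:ℝ)^n / (2*(n:ℝ)+1)^2) G := by
    rw [hG]; exact S1.hasSum
  have hT2 : (∑' n : ℕ, (-1:ℝ)^n / (2*(n:ℝ)+3)^2) = 1 - G := by
    have hshift := Summable.tsum_eq_zero_add S1
    have : (fun n : ℕ => (-1:ℝ)^(n+1) / (2*((n:ℝ)+1)+1)^2)
        = (fun n : ℕ => -((-1:ℝ)^n / (2*(n:ℝ)+3)^2)) := by
      funext n; rw [pow_succ]; ring_nf
    rw [show ((0:ℕ):ℝ) = 0 by norm_num] at hshift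
    push_cast at hshift
    rw [this] at hshift
    rw [tsum_neg] at hshift
    rw [← hG] at hshift
    norm_num at hshift
    linarith
  have h2 : HasSum (fun n : ℕ => (-1:ℝ)^n / (2*(n:ℝ)+3)^2) (1 - G) := by
    rw [← hT2]; exact S2.hasSum
  have hT3 : (∑' n : ℕ, (-1:ℝ)^n / (2*(n:ℝ)+5)^2) = G - 8/9 := by
    have hshift := Summable.tsum_eq_zero_add S2
    have : (fun n : ℕ => (-1:ℝ)^(n+1) / (2*((n:ℝ)+1)+3)^2)
        = (fun n : ℕ => -((-1:ℝ)^n / (2*(n:ℝ)+5)^2)) := by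
      funext n; rw [pow_succ]; ring_nf
    push_cast at hshift
    rw [this] at hshift
    rw [tsum_neg] at hshift
    rw [hT2] at hshift
    norm_num at hshift
    linarith
  have h3 : HasSum (fun n : ℕ => (-1:ℝ)^n / (2*(n:ℝ)+5)^2) (G - 8/9) := by
    rw [← hT3]; exact S3.hasSum
  -- combine
  have hcomb := (((h1.mul_left (1/64)).add (h2.mul_left (1/16))).add
    ((h3.mul_left (1/64)).add (h4.mul_left (-3/128))))
  have hfun : (fun n : ℕ => (1/64) * ((-1:ℝ)^n / (2*(n:ℝ)+1)^2) + (1/16) * ((-1:ℝ)^n / (2*(n:ℝ)+3)^2)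
        + ((1/64) * ((-1:ℝ)^n / (2*(n:ℝ)+5)^2)
          + (-3/128) * ((-1:ℝ)^n / (2*(n:ℝ)+1) - (-1:ℝ)^n / (2*(n:ℝ)+5))))
      = (fun n : ℕ => (-1:ℝ)^n /
        ((2*(n:ℝ)+1)^2 * (2*(n:ℝ)+3)^2 * (2*(n:ℝ)+5)^2)) := by
    funext n
    have a1 : (2*(n:ℝ)+1) ≠ 0 := by positivity
    have a3 : (2*(n:ℝ)+3) ≠ 0 := by positivity
    have a5 : (2*(n:ℝ)+5) ≠ 0 := by positivity
    field_simp
    ring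
  rw [hfun] at hcomb
  rw [hcomb.tsum_eq]
  ring
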